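/- arXiv:1601.01816 — 4 statements merged into one kernel-verified Lean document; each statement's English description precedes it below -/
import Mathlib

section
/- Let S0 and S1 be nonempty finite subsets of ℝ² in general position such that the convex hull of S0 is contained in the convex hull of S1. Then there is no outer common tangent of S0 and S1. -/
/-- Finite sets `S0, S1 ⊆ ℝ²` are in *general position* if they are disjoint
and no three distinct points of `S0 ∪ S1` are collinear. -/
def InGeneralPosition (S0 S1 : Set (ℝ × ℝ)) : Prop :=
  S0 ∩ S1 = ∅ ∧
    ∀ a ∈ S0 ∪ S1, ∀ b ∈ S0 ∪ S1, ∀ c ∈ S0 ∪ S1,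
      a ≠ b → a ≠ c → b ≠ c → ¬ Collinear ℝ ({a, b, c} : Set (ℝ × ℝ))

/-- The line `{x | f x = c}` is an *outer common tangent* of `S0` and `S1` if
it intersects the convex hulls of both sets and `S0 ∪ S1` is contained in one
of the two closed half-planes of the line. -/
def IsOuterCommonTangent (f : ℝ × ℝ →ₗ[ℝ] ℝ) (c : ℝ) (S0 S1 : Set (ℝ × ℝ)) : Prop :=
  ({x | f x = c} ∩ convexHull ℝ S0).Nonempty ∧
  ({x | f x = c} ∩ convexHull ℝ S1).Nonempty ∧
    (S0 ∪ S1 ⊆ {x | f x ≤ c} ∨ S0 ∪ S1 ⊆ {x | c ≤ f x})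

/-- Any subset of a line `{x | f x = c}` (for `f ≠ 0`) is collinear. -/
lemma collinear_of_subset_line (f : ℝ × ℝ →ₗ[ℝ] ℝ) (c : ℝ) (hf : f ≠ 0)
    (s : Set (ℝ × ℝ)) (hs : s ⊆ {x | f x = c}) : Collinear ℝ s := by
  rcases s.eq_empty_or_nonempty with rfl | ⟨p, hp⟩
  · exact collinear_empty ℝ _
  set a : ℝ := f (1, 0) with ha
  set b : ℝ := f (0, 1) with hb
  have hfval : ∀ x : ℝ × ℝ, f x = x.1 * a + x.2 * b := by
    intro x
    have hx : x = x.1 • ((1 : ℝ), (0 : ℝ)) + x.2 • ((0 : ℝ), (1 : ℝ)) := by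
      simp [Prod.ext_iff]
    rw [hx, map_add, map_smul, map_smul]
    simp [ha, hb, mul_comm]
  have hab : a ≠ 0 ∨ b ≠ 0 := by
    by_contra h
    push_neg at h
    apply hf
    apply LinearMap.ext
    intro x
    simp [hfval x, h.1, h.2]
  rw [collinear_iff_of_mem hp]
  refine ⟨(b, -a), fun q hq => ?_⟩
  have hd : (q.1 - p.1) * a + (q.2 - p.2) * b = 0 := by
    have h1 : f q = c := hs hq
    have h2 : f p = c := hs hp
    rw [hfval] at h1 h2
    linarith
  rcases hab with hA | hB
  · refine ⟨-(q.2 - p.2) / a, ?_⟩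
    have e1 : q.1 = -(q.2 - p.2) / a * b + p.1 := by
      field_simp
      linear_combination hd
    have e2 : q.2 = -(q.2 - p.2) / a * (-a) + p.2 := by
      field_simp
      ring
    apply Prod.ext
    · simpa using e1
    · simpa using e2
  · refine ⟨(q.1 - p.1) / b, ?_⟩
    have e1 : q.1 = (q.1 - p.1) / b * b + p.1 := by
      field_simp
      ring
    have e2 : q.2 = (q.1 - p.1) / b * (-a) + p.2 := by
      field_simp
      linear_combination hd
    apply Prod.ext
    · simpa using e1
    · simpa using e2

/-- Face lemma: if `x` is in the hull of a finite set `S`, `f ≤ c` on `S`,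
and `f x = c`, then `x` is in the hull of `S ∩ {f = c}`. -/
lemma mem_convexHull_face {S : Set (ℝ × ℝ)} (hS : S.Finite)
    {f : ℝ × ℝ →ₗ[ℝ] ℝ} {c : ℝ} (hle : ∀ s ∈ S, f s ≤ c)
    {x : ℝ × ℝ} (hx : x ∈ convexHull ℝ S) (hfx : f x = c) :
    x ∈ convexHull ℝ {y ∈ S | f y = c} := by
  classical
  set t : Finset (ℝ × ℝ) := hS.toFinset with ht
  have hcoe : (t : Set (ℝ × ℝ)) = S := hS.coe_toFinset
  rw [← hcoe, Finset.convexHull_eq] at hx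
  obtain ⟨w, hw0, hw1, hwx⟩ := hx
  have hxsum : x = ∑ y ∈ t, w y • y := by
    rw [← hwx, Finset.centerMass_eq_of_sum_1 _ _ hw1]
    rfl
  have hfsum : ∑ y ∈ t, w y * f y = c := by
    have : f x = ∑ y ∈ t, w y * f y := by
      rw [hxsum, map_sum]
      simp [smul_eq_mul]
    rw [← this, hfx]
  have hzero : ∀ y ∈ t, w y * (c - f y) = 0 := by
    rw [← Finset.sum_eq_zero_iff_of_nonneg]
    · have : ∑ y ∈ t, w y * (c - f y) = (∑ y ∈ t, w y) * c - ∑ y ∈ t, w y * f y := by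
        rw [Finset.sum_mul, ← Finset.sum_sub_distrib]
        congr 1
        ext y
        ring
      rw [this, hw1, hfsum, one_mul, sub_self]
    · intro y hy
      have hy' : y ∈ S := by rw [← hcoe]; exact_mod_cast hy
      exact mul_nonneg (hw0 y hy) (by linarith [hle y hy'])
  have hw0' : ∀ y ∈ t, f y ≠ c → w y = 0 := by
    intro y hy hne
    have hy' : y ∈ S := by rw [← hcoe]; exact_mod_cast hy
    have := hzero y hy
    rcases mul_eq_zero.mp this with h | h
    · exact h
    · exact absurd (by linarith : f y = c) hne
  set t' : Finset (ℝ × ℝ) := t.filter (fun y => f y = c) with ht'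
  have hcoe' : (t' : Set (ℝ × ℝ)) = {y ∈ S | f y = c} := by
    ext y
    simp [ht', ← hcoe]
  rw [← hcoe', Finset.convexHull_eq]
  refine ⟨w, fun y hy => hw0 y (Finset.mem_of_mem_filter y hy), ?_, ?_⟩
  · rw [← hw1]
    apply Finset.sum_subset (Finset.filter_subset _ _)
    intro y hy hny
    apply hw0' y hy
    intro hc
    exact hny (Finset.mem_filter.mpr ⟨hy, hc⟩)
  · have hsum1' : ∑ y ∈ t', w y = 1 := by
      rw [← hw1]
      apply Finset.sum_subset (Finset.filter_subset _ _)
      intro y hy hny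
      apply hw0' y hy
      intro hc
      exact hny (Finset.mem_filter.mpr ⟨hy, hc⟩)
    rw [Finset.centerMass_eq_of_sum_1 _ _ hsum1', hxsum]
    apply Finset.sum_subset (Finset.filter_subset _ _)
    intro y hy hny
    have : w y = 0 := by
      apply hw0' y hy
      intro hc
      exact hny (Finset.mem_filter.mpr ⟨hy, hc⟩)
    simp [this]

/-- Auxiliary: the one-sided case. -/
lemma aux_no_tangent (S0 S1 : Set (ℝ × ℝ))
    (h0fin : S0.Finite) (h1fin : S1.Finite)
    (hgen : InGeneralPosition S0 S1)
    (hnested : convexHull ℝ S0 ⊆ convexHull ℝ S1)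
    (f : ℝ × ℝ →ₗ[ℝ] ℝ) (c : ℝ) (hf : f ≠ 0)
    (hx0 : ({x | f x = c} ∩ convexHull ℝ S0).Nonempty)
    (hle : ∀ s ∈ S0 ∪ S1, f s ≤ c) : False := by
  obtain ⟨x0, hx0line, hx0hull⟩ := hx0
  have hle0 : ∀ s ∈ S0, f s ≤ c := fun s hs => hle s (Or.inl hs)
  have hle1 : ∀ s ∈ S1, f s ≤ c := fun s hs => hle s (Or.inr hs)
  -- get a point a ∈ S0 on the line
  have hx0face : x0 ∈ convexHull ℝ {y ∈ S0 | f y = c} :=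
    mem_convexHull_face h0fin hle0 hx0hull hx0line
  have hT0ne : {y ∈ S0 | f y = c}.Nonempty := by
    by_contra h
    rw [Set.not_nonempty_iff_eq_empty] at h
    rw [h] at hx0face
    simp at hx0face
  obtain ⟨a, haS0, hafc⟩ := hT0ne
  -- a is in hull S1, on the line, so in hull of T = S1 ∩ line
  have haHull : a ∈ convexHull ℝ S1 := hnested (subset_convexHull ℝ S0 haS0)
  have haface : a ∈ convexHull ℝ {y ∈ S1 | f y = c} :=
    mem_convexHull_face h1fin hle1 haHull hafc
  set T : Set (ℝ × ℝ) := {y ∈ S1 | f y = c} with hT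
  have haNotS1 : a ∉ S1 := by
    intro h
    have : a ∈ S0 ∩ S1 := ⟨haS0, h⟩
    rw [hgen.1] at this
    exact this
  rcases Set.subsingleton_or_nontrivial T with hsub | hntriv
  · -- T is a subsingleton; since hull T ∋ a, T = {b} and a = b ∈ S1
    have hTne : T.Nonempty := by
      by_contra h
      rw [Set.not_nonempty_iff_eq_empty] at h
      rw [h] at haface
      simp at haface
    obtain ⟨b, hb⟩ := hTne
    have hTeq : T = {b} := hsub.eq_singleton_of_mem hb
    rw [hTeq, convexHull_singleton] at haface
    rw [haface] at haNotS1
    exact haNotS1 hb.1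
  · -- T has two distinct points b1 ≠ b2; then a, b1, b2 are collinear
    obtain ⟨b1, hb1, b2, hb2, hne⟩ := hntriv
    have hcol : Collinear ℝ ({a, b1, b2} : Set (ℝ × ℝ)) := by
      apply collinear_of_subset_line f c hf
      intro z hz
      rcases hz with rfl | rfl | rfl
      · exact hafc
      · exact hb1.2
      · exact hb2.2
    refine hgen.2 a (Or.inl haS0) b1 (Or.inr hb1.1) b2 (Or.inr hb2.1) ?_ ?_ hne hcol
    · rintro rfl; exact haNotS1 hb1.1
    · rintro rfl; exact haNotS1 hb2.1

/-- If the convex hull of `S0` is contained in the convex hull of `S1`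
(for nonempty finite sets in general position), then there is no outer
common tangent of `S0` and `S1`. -/
theorem no_outerCommonTangent_of_nested (S0 S1 : Set (ℝ × ℝ))
    (h0fin : S0.Finite) (h1fin : S1.Finite)
    (h0ne : S0.Nonempty) (h1ne : S1.Nonempty)
    (hgen : InGeneralPosition S0 S1)
    (hnested : convexHull ℝ S0 ⊆ convexHull ℝ S1) :
    ¬ ∃ (f : ℝ × ℝ →ₗ[ℝ] ℝ) (c : ℝ), f ≠ 0 ∧ IsOuterCommonTangent f c S0 S1 := by
  rintro ⟨f, c, hf, hx0, _hx1, hside⟩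
  rcases hside with hle | hge
  · exact aux_no_tangent S0 S1 h0fin h1fin hgen hnested f c hf hx0
      (fun s hs => hle hs)
  · refine aux_no_tangent S0 S1 h0fin h1fin hgen hnested (-f) (-c)
      (neg_ne_zero.mpr hf) ?_ (fun s hs => by simpa using hge hs)
    have : {x : ℝ × ℝ | (-f) x = -c} = {x | f x = c} := by
      ext x; simp [neg_eq_iff_eq_neg]
    rw [this]
    exact hx0
end

section
/- Let S0 and S1 be nonempty finite subsets of ℝ² in general position such that S0 ∪ S1 has at least 3 elements, the convex hull of S0 is not contained in the convex hull of S1, and the convex hull of S1 is not contained in the convex hull of S0. Then there exist r0 ∈ S0 and r1 ∈ S1 such that every point of S0 ∪ S1 lies weakly to the right of the directed line from r0 to r1, and there exist ℓ0 ∈ S0 and ℓ1 ∈ S1 such that every point of S0 ∪ S1 lies weakly to the left of the directed line from ℓ0 to ℓ1; moreover (r0, r1) ≠ (ℓ0, ℓ1), so the two corresponding tangent lines are distinct. -/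
/-- `det (b − a, p − a)`: positive iff `p` lies strictly to the left of the
directed line from `a` to `b`. -/
def detSide (a b p : ℝ × ℝ) : ℝ :=
  (b.1 - a.1) * (p.2 - a.2) - (b.2 - a.2) * (p.1 - a.1)

lemma detSide_swap (a b q : ℝ × ℝ) : detSide b a q = -detSide a b q := by
  unfold detSide; ring

private lemma prod_eq_smul_aux {a b p : ℝ × ℝ} {r : ℝ}
    (h1 : p.1 = r * (b.1 - a.1) + a.1) (h2 : p.2 = r * (b.2 - a.2) + a.2) :
    p = r • (b - a) + a := by
  ext
  · simp only [Prod.fst_add, Prod.smul_fst, Prod.fst_sub, smul_eq_mul]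
    linarith
  · simp only [Prod.snd_add, Prod.smul_snd, Prod.snd_sub, smul_eq_mul]
    linarith

lemma collinear_of_detSide_eq_zero {a b c : ℝ × ℝ} (h : detSide a b c = 0) :
    Collinear ℝ ({a, b, c} : Set (ℝ × ℝ)) := by
  rw [collinear_iff_of_mem (Set.mem_insert a {b, c})]
  by_cases hab : b = a
  · refine ⟨c - a, ?_⟩
    rintro p (rfl | rfl | rfl)
    · exact ⟨0, by simp⟩
    · exact ⟨0, by simp [hab]⟩
    · exact ⟨1, by simp⟩
  · refine ⟨b - a, ?_⟩
    have hv : b.1 - a.1 ≠ 0 ∨ b.2 - a.2 ≠ 0 := by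
      by_contra hc
      push_neg at hc
      exact hab (by ext <;> [linarith [hc.1]; linarith [hc.2]])
    rintro p (rfl | rfl | rfl)
    · exact ⟨0, by simp⟩
    · exact ⟨1, by simp⟩
    · unfold detSide at h
      rcases hv with h1 | h1
      · refine ⟨(p.1 - a.1) / (b.1 - a.1), prod_eq_smul_aux ?_ ?_⟩
        · field_simp
          ring
        · field_simp
          nlinarith [h]
      · refine ⟨(p.2 - a.2) / (b.2 - a.2), prod_eq_smul_aux ?_ ?_⟩
        · field_simp
          nlinarith [h]
        · field_simp
          ring

lemma detSide_key (θ : ℝ) (a b q : ℝ × ℝ)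
    (h : Real.cos θ * a.1 + Real.sin θ * a.2 = Real.cos θ * b.1 + Real.sin θ * b.2) :
    detSide a b q = (-Real.sin θ * (b.1 - a.1) + Real.cos θ * (b.2 - a.2)) *
      ((Real.cos θ * a.1 + Real.sin θ * a.2) - (Real.cos θ * q.1 + Real.sin θ * q.2)) := by
  have hp := Real.sin_sq_add_cos_sq θ
  unfold detSide
  linear_combination (-(Real.cos θ * (q.2 - a.2) - Real.sin θ * (q.1 - a.1))) * h -
    ((b.1 - a.1) * (q.2 - a.2) - (b.2 - a.2) * (q.1 - a.1)) * hp

lemma exists_dir_dominates (A B : Set (ℝ × ℝ)) (hAfin : A.Finite)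
    (hAne : A.Nonempty) (hBne : B.Nonempty) (hBfin : B.Finite)
    (h : ¬ convexHull ℝ A ⊆ convexHull ℝ B) :
    ∃ θ : ℝ, ∃ a ∈ A, ∀ p ∈ B,
      Real.cos θ * p.1 + Real.sin θ * p.2 < Real.cos θ * a.1 + Real.sin θ * a.2 := by
  classical
  obtain ⟨x, hxA, hxB⟩ := Set.not_subset.1 h
  obtain ⟨f, u, hfu, hux⟩ := geometric_hahn_banach_closed_point
    (convex_convexHull ℝ B) (hBfin.isCompact_convexHull (𝕜 := ℝ)).isClosed hxB
  set F := hAfin.toFinset with hF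
  have hFne : F.Nonempty := by
    rwa [hF, Set.Finite.toFinset_nonempty]
  set m := F.sup' hFne (fun p => f p) with hm
  have hxm : f x ≤ m := by
    have hsub : A ⊆ {y | f y ≤ m} := by
      intro y hy
      exact Finset.le_sup' (fun p => f p) (hAfin.mem_toFinset.2 hy)
    have hconv : Convex ℝ {y : ℝ × ℝ | f y ≤ m} :=
      convex_halfSpace_le (f := fun y : ℝ × ℝ => f y) ⟨fun a b => map_add f a b, fun c a => map_smul f c a⟩ m
    exact convexHull_min hsub hconv hxA
  obtain ⟨a, haF, ha⟩ := Finset.exists_mem_eq_sup' hFne (fun p => f p)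
  have haA : a ∈ A := hAfin.mem_toFinset.1 haF
  set w1 := f (1, 0) with hw1
  set w2 := f (0, 1) with hw2
  have hf : ∀ p : ℝ × ℝ, f p = w1 * p.1 + w2 * p.2 := by
    intro p
    have hp : (p : ℝ × ℝ) = p.1 • ((1 : ℝ), (0 : ℝ)) + p.2 • ((0 : ℝ), (1 : ℝ)) := by
      ext <;> simp
    calc f p = f (p.1 • ((1 : ℝ), (0 : ℝ)) + p.2 • ((0 : ℝ), (1 : ℝ))) := by rw [← hp]
      _ = w1 * p.1 + w2 * p.2 := by
          rw [map_add, map_smul, map_smul, smul_eq_mul, smul_eq_mul]; ring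
  have hfa : ∀ p ∈ B, f p < f a := by
    intro p hp
    have h1 : f p < u := hfu p (subset_convexHull ℝ B hp)
    have ham : m = f a := ha
    have := hux.trans_le (hxm.trans_eq ham)
    linarith
  have hwne : (⟨w1, w2⟩ : ℂ) ≠ 0 := by
    intro hc
    obtain ⟨p0, hp0⟩ := hBne
    have h1 : w1 = 0 := by
      have := congrArg Complex.re hc; simpa using this
    have h2 : w2 = 0 := by
      have := congrArg Complex.im hc; simpa using this
    have := hfa p0 hp0
    rw [hf p0, hf a, h1, h2] at this
    linarith
  set z : ℂ := ⟨w1, w2⟩ with hz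
  set θ := z.arg with hθ
  have hr : 0 < ‖z‖ := by
    exact norm_pos_iff.2 hwne
  have hcos : Real.cos θ = w1 / ‖z‖ := by
    rw [hθ, Complex.cos_arg hwne]
  have hsin : Real.sin θ = w2 / ‖z‖ := by
    rw [hθ, Complex.sin_arg]
  refine ⟨θ, a, haA, fun p hp => ?_⟩
  rw [hcos, hsin]
  have hlt := hfa p hp
  rw [hf p, hf a] at hlt
  rw [div_mul_eq_mul_div, div_mul_eq_mul_div, ← add_div,
      div_mul_eq_mul_div, div_mul_eq_mul_div, ← add_div]
  gcongr

lemma exists_left_tangent (S0 S1 : Set (ℝ × ℝ))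
    (h0fin : S0.Finite) (h1fin : S1.Finite)
    (h0ne : S0.Nonempty) (h1ne : S1.Nonempty)
    (hdisj : ∀ x, x ∈ S0 → x ∈ S1 → False)
    (hcol : ∀ a ∈ S0 ∪ S1, ∀ b ∈ S0 ∪ S1, ∀ c ∈ S0 ∪ S1,
      a ≠ b → a ≠ c → b ≠ c → ¬ Collinear ℝ ({a, b, c} : Set (ℝ × ℝ)))
    (hn01 : ¬ convexHull ℝ S0 ⊆ convexHull ℝ S1)
    (hn10 : ¬ convexHull ℝ S1 ⊆ convexHull ℝ S0) :
    ∃ a ∈ S0, ∃ b ∈ S1, ∀ q ∈ S0 ∪ S1, 0 ≤ detSide a b q := by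
  classical
  set d : ℝ → ℝ × ℝ → ℝ := fun θ p => Real.cos θ * p.1 + Real.sin θ * p.2 with hd
  set F0 := h0fin.toFinset with hF0def
  set F1 := h1fin.toFinset with hF1def
  have hF0 : F0.Nonempty := (Set.Finite.toFinset_nonempty _).2 h0ne
  have hF1 : F1.Nonempty := (Set.Finite.toFinset_nonempty _).2 h1ne
  set g : ℝ → ℝ := fun θ => F0.sup' hF0 (d θ) - F1.sup' hF1 (d θ) with hg
  have hdcont : ∀ p : ℝ × ℝ, Continuous (fun θ => d θ p) := fun p =>
    (Real.continuous_cos.mul continuous_const).add (Real.continuous_sin.mul continuous_const)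
  have hgcont : Continuous g := by
    apply Continuous.sub
    · exact Continuous.finset_sup'_apply hF0 (fun p _ => hdcont p)
    · exact Continuous.finset_sup'_apply hF1 (fun p _ => hdcont p)
  -- a direction where S0 dominates
  obtain ⟨θ1, a0, ha0, hdom0⟩ := exists_dir_dominates S0 S1 h0fin h0ne h1ne h1fin hn01
  have hgθ1 : 0 < g θ1 := by
    obtain ⟨p1, hp1F, hp1⟩ := Finset.exists_mem_eq_sup' hF1 (d θ1)
    have h1 : d θ1 p1 < d θ1 a0 := hdom0 p1 (h1fin.mem_toFinset.1 hp1F)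
    have h2 : d θ1 a0 ≤ F0.sup' hF0 (d θ1) := Finset.le_sup' (d θ1) (h0fin.mem_toFinset.2 ha0)
    have h3 : F1.sup' hF1 (d θ1) = d θ1 p1 := hp1
    simp only [hg]
    linarith
  -- a direction where S1 dominates, pushed to the right of θ1
  obtain ⟨θn, a1, ha1, hdom1⟩ := exists_dir_dominates S1 S0 h1fin h1ne h0ne h0fin hn10
  have hgθn : g θn < 0 := by
    obtain ⟨p0, hp0F, hp0⟩ := Finset.exists_mem_eq_sup' hF0 (d θn)
    have h1 : d θn p0 < d θn a1 := hdom1 p0 (h0fin.mem_toFinset.1 hp0F)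
    have h2 : d θn a1 ≤ F1.sup' hF1 (d θn) := Finset.le_sup' (d θn) (h1fin.mem_toFinset.2 ha1)
    have h3 : F0.sup' hF0 (d θn) = d θn p0 := hp0
    simp only [hg]
    linarith
  have hdper : ∀ (k : ℕ) (θ : ℝ) (p : ℝ × ℝ), d (θ + k * (2 * Real.pi)) p = d θ p := by
    intro k θ p
    simp only [hd]
    rw [(Real.cos_periodic.nat_mul k) θ, (Real.sin_periodic.nat_mul k) θ]
  obtain ⟨k, hk⟩ := exists_nat_gt ((θ1 - θn) / (2 * Real.pi))
  have hπ : (0 : ℝ) < 2 * Real.pi := by positivity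
  set θ2 := θn + k * (2 * Real.pi) with hθ2def
  have hθ12 : θ1 < θ2 := by
    have := (div_lt_iff₀ hπ).1 hk
    simp only [hθ2def]
    linarith
  have hgθ2 : g θ2 < 0 := by
    have : g θ2 = g θn := by
      simp only [hg, hθ2def]
      rw [Finset.sup'_congr hF0 rfl (fun p _ => hdper k θn p),
          Finset.sup'_congr hF1 rfl (fun p _ => hdper k θn p)]
    linarith [this, hgθn]
  -- IVT from the right
  set Z := Set.Icc θ1 θ2 ∩ {θ | 0 ≤ g θ} with hZdef
  have hZC : IsClosed Z := isClosed_Icc.inter (isClosed_le continuous_const hgcont)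
  have hZne : Z.Nonempty := ⟨θ1, ⟨le_refl _, hθ12.le⟩, hgθ1.le⟩
  have hZbdd : BddAbove Z := bddAbove_Icc.mono Set.inter_subset_left
  set θs := sSup Z with hθsdef
  have hθsZ : θs ∈ Z := hZC.csSup_mem hZne hZbdd
  have hθs1 : θ1 ≤ θs := hθsZ.1.1
  have hθs2 : θs ≤ θ2 := hθsZ.1.2
  have hgθs0 : 0 ≤ g θs := hθsZ.2
  have hafter : ∀ θ, θs < θ → θ ≤ θ2 → g θ < 0 := by
    intro θ hθ hθ2
    by_contra hc
    push_neg at hc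
    exact absurd (le_csSup hZbdd ⟨⟨hθs1.trans hθ.le, hθ2⟩, hc⟩) (not_le.2 hθ)
  have hθslt : θs < θ2 := lt_of_le_of_ne hθs2 (fun he => by rw [he] at hgθs0; linarith)
  have hgθsle : g θs ≤ 0 := by
    have htend : Filter.Tendsto g (nhdsWithin θs (Set.Ioi θs)) (nhds (g θs)) :=
      hgcont.continuousAt.continuousWithinAt
    refine le_of_tendsto htend ?_
    filter_upwards [Ioo_mem_nhdsGT_of_mem ⟨le_refl θs, hθslt⟩] with θ hθ
    exact (hafter θ hθ.1 hθ.2.le).le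
  have hgθs : g θs = 0 := le_antisymm hgθsle hgθs0
  -- extract the two maximizers
  obtain ⟨a, haF, ha⟩ := Finset.exists_mem_eq_sup' hF0 (d θs)
  obtain ⟨b, hbF, hb⟩ := Finset.exists_mem_eq_sup' hF1 (d θs)
  have haS : a ∈ S0 := h0fin.mem_toFinset.1 haF
  have hbS : b ∈ S1 := h1fin.mem_toFinset.1 hbF
  have hab : d θs a = d θs b := by
    have : F0.sup' hF0 (d θs) - F1.sup' hF1 (d θs) = 0 := hgθs
    rw [ha, hb] at this
    linarith
  have hab' : Real.cos θs * a.1 + Real.sin θs * a.2 =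
      Real.cos θs * b.1 + Real.sin θs * b.2 := hab
  have hUa : ∀ q ∈ S0 ∪ S1, d θs q ≤ d θs a := by
    rintro q (hq | hq)
    · exact le_of_le_of_eq (Finset.le_sup' (d θs) (h0fin.mem_toFinset.2 hq)) ha
    · calc d θs q ≤ F1.sup' hF1 (d θs) := Finset.le_sup' (d θs) (h1fin.mem_toFinset.2 hq)
        _ = d θs b := hb
        _ = d θs a := hab.symm
  have hane : a ≠ b := fun h => hdisj a haS (h ▸ hbS)
  set t := -Real.sin θs * (b.1 - a.1) + Real.cos θs * (b.2 - a.2) with htdef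
  have hkey : ∀ q : ℝ × ℝ, detSide a b q = t * (d θs a - d θs q) := by
    intro q
    exact detSide_key θs a b q hab'
  -- uniqueness of the S1 maximizer
  have huniq : ∀ p ∈ S1, p ≠ b → d θs p < d θs b := by
    intro p hp hpb
    rcases lt_or_eq_of_le (le_of_le_of_eq (Finset.le_sup' (d θs) (h1fin.mem_toFinset.2 hp)) hb)
      with h | h
    · exact h
    · exfalso
      have hdet : detSide a b p = 0 := by
        rw [hkey p, hab, ← h, sub_self, mul_zero]
      have hap : a ≠ p := fun he => hdisj a haS (he ▸ hp)
      exact hcol a (Or.inl haS) b (Or.inr hbS) p (Or.inr hp) hane hap (Ne.symm hpb)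
        (collinear_of_detSide_eq_zero hdet)
  -- t is nonzero
  have htne : t ≠ 0 := by
    intro ht0
    have hp := Real.sin_sq_add_cos_sq θs
    have hA : Real.cos θs * (b.1 - a.1) + Real.sin θs * (b.2 - a.2) = 0 := by
      linear_combination -hab'
    have ht0' : -Real.sin θs * (b.1 - a.1) + Real.cos θs * (b.2 - a.2) = 0 := ht0
    have hv1 : b.1 - a.1 = 0 := by
      linear_combination Real.cos θs * hA - Real.sin θs * ht0' - (b.1 - a.1) * hp
    have hv2 : b.2 - a.2 = 0 := by
      linear_combination Real.sin θs * hA + Real.cos θs * ht0' - (b.2 - a.2) * hp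
    exact hane (by ext <;> [linarith; linarith])
  -- t is nonnegative
  have htnn : 0 ≤ t := by
    by_contra htneg
    push_neg at htneg
    set l := nhdsWithin θs (Set.Ioi θs) with hldef
    have hEb : ∀ᶠ θ in l, d θ b < d θ a := by
      have hmem : Set.Ioo θs (θs + Real.pi) ∈ l :=
        Ioo_mem_nhdsGT_of_mem ⟨le_refl _, by linarith [Real.pi_pos]⟩
      filter_upwards [hmem] with θ hθ
      have hsin : 0 < Real.sin (θ - θs) :=
        Real.sin_pos_of_pos_of_lt_pi (by linarith [hθ.1]) (by linarith [hθ.2])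
      have hc : Real.cos θ = Real.cos (θ - θs) * Real.cos θs - Real.sin (θ - θs) * Real.sin θs := by
        have := Real.cos_add (θ - θs) θs
        rwa [sub_add_cancel] at this
      have hs : Real.sin θ = Real.sin (θ - θs) * Real.cos θs + Real.cos (θ - θs) * Real.sin θs := by
        have := Real.sin_add (θ - θs) θs
        rwa [sub_add_cancel] at this
      have hexp : d θ a - d θ b =
          Real.cos (θ - θs) * (d θs a - d θs b) - Real.sin (θ - θs) * t := by
        simp only [hd, htdef]
        linear_combination (a.1 - b.1) * hc + (a.2 - b.2) * hs
      have : d θ a - d θ b = - (Real.sin (θ - θs) * t) := by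
        rw [hexp, hab, sub_self, mul_zero, zero_sub]
      nlinarith [mul_pos hsin (neg_pos.2 htneg)]
    have hEp : ∀ p ∈ F1, ∀ᶠ θ in l, d θ p < d θ a := by
      intro p hpF
      by_cases hpb : p = b
      · rw [hpb]; exact hEb
      · have hplt : d θs p < d θs a := by
          have := huniq p (h1fin.mem_toFinset.1 hpF) hpb
          linarith [hab]
        have hcont : Continuous (fun θ => d θ a - d θ p) := (hdcont a).sub (hdcont p)
        have hopen : IsOpen {θ : ℝ | 0 < d θ a - d θ p} := isOpen_lt continuous_const hcont
        have hmem : {θ : ℝ | 0 < d θ a - d θ p} ∈ l :=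
          nhdsWithin_le_nhds (hopen.mem_nhds (by simp only [Set.mem_setOf_eq]; linarith))
        filter_upwards [hmem] with θ hθ
        linarith [hθ]
    have hEall : ∀ᶠ θ in l, ∀ p ∈ F1, d θ p < d θ a := (Filter.eventually_all_finset F1).2 hEp
    have hElt : ∀ᶠ θ in l, θ < θ2 :=
      Filter.eventually_of_mem (nhdsWithin_le_nhds (Iio_mem_nhds hθslt)) (fun θ h => h)
    have hEgt : ∀ᶠ θ in l, θs < θ :=
      Filter.eventually_of_mem self_mem_nhdsWithin (fun θ h => h)
    obtain ⟨θ, hall, hlt2, hgts⟩ := (hEall.and (hElt.and hEgt)).exists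
    obtain ⟨hlt2, hgts⟩ := (⟨hlt2, hgts⟩ : _ ∧ _)
    have hneg : g θ < 0 := hafter θ hgts hlt2.le
    obtain ⟨p1, hp1F, hp1⟩ := Finset.exists_mem_eq_sup' hF1 (d θ)
    have h1 : d θ p1 < d θ a := hall p1 hp1F
    have h2 : d θ a ≤ F0.sup' hF0 (d θ) := Finset.le_sup' (d θ) haF
    have h3 : F1.sup' hF1 (d θ) = d θ p1 := hp1
    have : 0 < g θ := by simp only [hg]; linarith
    linarith
  have ht : 0 < t := lt_of_le_of_ne htnn (Ne.symm htne)
  refine ⟨a, haS, b, hbS, fun q hq => ?_⟩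
  rw [hkey q]
  exact mul_nonneg ht.le (sub_nonneg.2 (hUa q hq))


/-- If `S0` and `S1` are nonempty finite sets in general position,
`S0 ∪ S1` has at least three elements, and neither convex hull contains the
other, then there are two distinct outer common tangents, given by pairs of
points `(r0, r1)` and `(ℓ0, ℓ1)` with `r0, ℓ0 ∈ S0` and `r1, ℓ1 ∈ S1`:
all of `S0 ∪ S1` lies weakly to the right of the directed line from `r0` to
`r1`, and weakly to the left of the directed line from `ℓ0` to `ℓ1`. -/
theorem exists_two_outer_common_tangents (S0 S1 : Set (ℝ × ℝ))
    (h0fin : S0.Finite) (h1fin : S1.Finite)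
    (h0ne : S0.Nonempty) (h1ne : S1.Nonempty)
    (hgen : InGeneralPosition S0 S1)
    (hcard : 3 ≤ (S0 ∪ S1).ncard)
    (hn01 : ¬ convexHull ℝ S0 ⊆ convexHull ℝ S1)
    (hn10 : ¬ convexHull ℝ S1 ⊆ convexHull ℝ S0) :
    ∃ r0 ∈ S0, ∃ r1 ∈ S1, ∃ l0 ∈ S0, ∃ l1 ∈ S1,
      (∀ q ∈ S0 ∪ S1, detSide r0 r1 q ≤ 0) ∧
      (∀ q ∈ S0 ∪ S1, 0 ≤ detSide l0 l1 q) ∧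
      (r0, r1) ≠ (l0, l1) := by
  obtain ⟨hdis, hcol⟩ := hgen
  have hdisj : ∀ x, x ∈ S0 → x ∈ S1 → False := fun x h0 h1 =>
    Set.eq_empty_iff_forall_notMem.1 hdis x ⟨h0, h1⟩
  obtain ⟨l0, hl0, l1, hl1, hleft⟩ :=
    exists_left_tangent S0 S1 h0fin h1fin h0ne h1ne hdisj hcol hn01 hn10
  have hUcomm : S1 ∪ S0 = S0 ∪ S1 := Set.union_comm S1 S0
  have hcol' : ∀ a ∈ S1 ∪ S0, ∀ b ∈ S1 ∪ S0, ∀ c ∈ S1 ∪ S0,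
      a ≠ b → a ≠ c → b ≠ c → ¬ Collinear ℝ ({a, b, c} : Set (ℝ × ℝ)) := by
    intro a ha b hb c hc
    exact hcol a (hUcomm ▸ ha) b (hUcomm ▸ hb) c (hUcomm ▸ hc)
  obtain ⟨r1, hr1, r0, hr0, hright'⟩ :=
    exists_left_tangent S1 S0 h1fin h0fin h1ne h0ne (fun x h1 h0 => hdisj x h0 h1)
      hcol' hn10 hn01
  have hright : ∀ q ∈ S0 ∪ S1, detSide r0 r1 q ≤ 0 := by
    intro q hq
    have h1 := hright' q (hUcomm.symm ▸ hq)
    have h2 := detSide_swap r1 r0 q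
    linarith
  refine ⟨r0, hr0, r1, hr1, l0, hl0, l1, hl1, hright, hleft, ?_⟩
  intro heq
  rw [Prod.ext_iff] at heq
  obtain ⟨h0eq, h1eq⟩ := heq
  subst h0eq; subst h1eq
  have hsub : ¬ (S0 ∪ S1 ⊆ ({r0, r1} : Set (ℝ × ℝ))) := by
    intro hsubs
    have h2 : (S0 ∪ S1).ncard ≤ ({r0, r1} : Set (ℝ × ℝ)).ncard :=
      Set.ncard_le_ncard hsubs ((Set.finite_singleton r1).insert r0)
    have h3 : ({r0, r1} : Set (ℝ × ℝ)).ncard ≤ 2 := by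
      refine le_trans (Set.ncard_insert_le _ _) ?_
      simp [Set.ncard_singleton]
    omega
  obtain ⟨q, hqU, hq2⟩ := Set.not_subset.1 hsub
  simp only [Set.mem_insert_iff, Set.mem_singleton_iff, not_or] at hq2
  have hzero : detSide r0 r1 q = 0 := le_antisymm (hright q hqU) (hleft q hqU)
  have hr01 : r0 ≠ r1 := fun h => hdisj r0 hr0 (h ▸ hr1)
  exact hcol r0 (Or.inl hr0) r1 (Or.inr hr1) q hqU hr01 (Ne.symm hq2.1) (Ne.symm hq2.2)
    (collinear_of_detSide_eq_zero hzero)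
end

section
/- Let S0 and S1 be nonempty finite subsets of ℝ² in general position such that S0 ∪ S1 has at least 3 elements and the convex hulls of S0 and S1 are disjoint. Then there exist x ∈ S0 and y ∈ S1 such that every point of S0 lies weakly to the left and every point of S1 lies weakly to the right of the directed line from x to y, and there exist x' ∈ S0 and y' ∈ S1 such that every point of S0 lies weakly to the right and every point of S1 lies weakly to the left of the directed line from x' to y'; moreover (x, y) ≠ (x', y'), so the two corresponding tangent lines are distinct. -/
lemma tangent_pair_max (S0 S1 : Set (ℝ × ℝ)) (a b : ℝ)
    (hab : 0 < a ^ 2 + b ^ 2)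
    (hpos : ∀ x ∈ S0, ∀ y ∈ S1, 0 < a * (y.1 - x.1) + b * (y.2 - x.2))
    (x y : ℝ × ℝ) (hx : x ∈ S0) (hy : y ∈ S1)
    (hmax : ∀ x' ∈ S0, ∀ y' ∈ S1,
      (a * (y'.2 - x'.2) - b * (y'.1 - x'.1)) / (a * (y'.1 - x'.1) + b * (y'.2 - x'.2)) ≤
        (a * (y.2 - x.2) - b * (y.1 - x.1)) / (a * (y.1 - x.1) + b * (y.2 - x.2))) :
    (∀ q ∈ S0, 0 ≤ detSide x y q) ∧ (∀ q ∈ S1, detSide x y q ≤ 0) := by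
  have hDxy := hpos x hx y hy
  constructor
  · intro q hq
    have h1 := hmax q hq y hy
    have hDqy := hpos q hq y hy
    rw [div_le_div_iff₀ hDqy hDxy] at h1
    have hid : (a * (y.2 - x.2) - b * (y.1 - x.1)) * (a * (y.1 - q.1) + b * (y.2 - q.2)) -
        (a * (y.2 - q.2) - b * (y.1 - q.1)) * (a * (y.1 - x.1) + b * (y.2 - x.2)) =
        (a ^ 2 + b ^ 2) * detSide x y q := by
      unfold detSide; ring
    nlinarith [h1, hid, hab]
  · intro q hq
    have h1 := hmax x hx q hq
    have hDxq := hpos x hx q hq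
    rw [div_le_div_iff₀ hDxq hDxy] at h1
    have hid : (a * (q.2 - x.2) - b * (q.1 - x.1)) * (a * (y.1 - x.1) + b * (y.2 - x.2)) -
        (a * (y.2 - x.2) - b * (y.1 - x.1)) * (a * (q.1 - x.1) + b * (q.2 - x.2)) =
        (a ^ 2 + b ^ 2) * detSide x y q := by
      unfold detSide; ring
    nlinarith [h1, hid, hab]

lemma tangent_pair_min (S0 S1 : Set (ℝ × ℝ)) (a b : ℝ)
    (hab : 0 < a ^ 2 + b ^ 2)
    (hpos : ∀ x ∈ S0, ∀ y ∈ S1, 0 < a * (y.1 - x.1) + b * (y.2 - x.2))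
    (x y : ℝ × ℝ) (hx : x ∈ S0) (hy : y ∈ S1)
    (hmin : ∀ x' ∈ S0, ∀ y' ∈ S1,
      (a * (y.2 - x.2) - b * (y.1 - x.1)) / (a * (y.1 - x.1) + b * (y.2 - x.2)) ≤
        (a * (y'.2 - x'.2) - b * (y'.1 - x'.1)) / (a * (y'.1 - x'.1) + b * (y'.2 - x'.2))) :
    (∀ q ∈ S0, detSide x y q ≤ 0) ∧ (∀ q ∈ S1, 0 ≤ detSide x y q) := by
  have hDxy := hpos x hx y hy
  constructor
  · intro q hq
    have h1 := hmin q hq y hy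
    have hDqy := hpos q hq y hy
    rw [div_le_div_iff₀ hDxy hDqy] at h1
    have hid : (a * (y.2 - x.2) - b * (y.1 - x.1)) * (a * (y.1 - q.1) + b * (y.2 - q.2)) -
        (a * (y.2 - q.2) - b * (y.1 - q.1)) * (a * (y.1 - x.1) + b * (y.2 - x.2)) =
        (a ^ 2 + b ^ 2) * detSide x y q := by
      unfold detSide; ring
    nlinarith [h1, hid, hab]
  · intro q hq
    have h1 := hmin x hx q hq
    have hDxq := hpos x hx q hq
    rw [div_le_div_iff₀ hDxy hDxq] at h1
    have hid : (a * (q.2 - x.2) - b * (q.1 - x.1)) * (a * (y.1 - x.1) + b * (y.2 - x.2)) -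
        (a * (y.2 - x.2) - b * (y.1 - x.1)) * (a * (q.1 - x.1) + b * (q.2 - x.2)) =
        (a ^ 2 + b ^ 2) * detSide x y q := by
      unfold detSide; ring
    nlinarith [h1, hid, hab]

lemma collinear_of_detSide_zero (x y q : ℝ × ℝ) (hxy : x ≠ y)
    (h : detSide x y q = 0) : Collinear ℝ ({x, y, q} : Set (ℝ × ℝ)) := by
  rw [collinear_iff_of_mem (Set.mem_insert x _)]
  refine ⟨y - x, ?_⟩
  intro p hp
  unfold detSide at h
  rcases hp with rfl | rfl | rfl
  · exact ⟨0, by simp⟩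
  · exact ⟨1, by simp⟩
  · by_cases h1 : y.1 - x.1 ≠ 0
    · refine ⟨(p.1 - x.1) / (y.1 - x.1), ?_⟩
      have : p.2 - x.2 = (p.1 - x.1) / (y.1 - x.1) * (y.2 - x.2) := by
        field_simp; linarith
      ext <;> simp [Prod.smul_def, smul_eq_mul]
      · field_simp; ring
      · linarith [this]
    · push_neg at h1
      have h2 : y.2 - x.2 ≠ 0 := by
        intro h2
        apply hxy
        ext
        · linarith
        · linarith
      refine ⟨(p.2 - x.2) / (y.2 - x.2), ?_⟩
      have : p.1 - x.1 = (p.2 - x.2) / (y.2 - x.2) * (y.1 - x.1) := by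
        field_simp
        nlinarith [h, h1]
      ext <;> simp [Prod.smul_def, smul_eq_mul]
      · linarith [this]
      · field_simp; ring

/-- If `S0` and `S1` are nonempty finite sets in general position, `S0 ∪ S1`
has at least three elements, and the convex hulls of `S0` and `S1` are
disjoint, then there are two distinct separating common tangents, given by
pairs of points `(x, y)` and `(x', y')` with `x, x' ∈ S0` and `y, y' ∈ S1`:
`S0` lies weakly to the left and `S1` weakly to the right of the directed line
from `x` to `y`, while `S0` lies weakly to the right and `S1` weakly to the
left of the directed line from `x'` to `y'`. -/
theorem exists_two_separating_common_tangents (S0 S1 : Set (ℝ × ℝ))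
    (h0fin : S0.Finite) (h1fin : S1.Finite)
    (h0ne : S0.Nonempty) (h1ne : S1.Nonempty)
    (hgen : InGeneralPosition S0 S1)
    (hcard : 3 ≤ (S0 ∪ S1).ncard)
    (hdisj : Disjoint (convexHull ℝ S0) (convexHull ℝ S1)) :
    ∃ x ∈ S0, ∃ y ∈ S1, ∃ x' ∈ S0, ∃ y' ∈ S1,
      (∀ q ∈ S0, 0 ≤ detSide x y q) ∧ (∀ q ∈ S1, detSide x y q ≤ 0) ∧
      (∀ q ∈ S0, detSide x' y' q ≤ 0) ∧ (∀ q ∈ S1, 0 ≤ detSide x' y' q) ∧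
      (x, y) ≠ (x', y') := by
  -- separating functional
  obtain ⟨f, u, v, hfu, huv, hfv⟩ :=
    _root_.geometric_hahn_banach_compact_closed (convex_convexHull ℝ S0)
      (h0fin.isCompact_convexHull ℝ) (convex_convexHull ℝ S1)
      (h1fin.isCompact_convexHull ℝ).isClosed hdisj
  set a : ℝ := f (1, 0) with ha
  set b : ℝ := f (0, 1) with hb
  have hf : ∀ p : ℝ × ℝ, f p = a * p.1 + b * p.2 := by
    intro p
    have hp : p = p.1 • ((1 : ℝ), (0 : ℝ)) + p.2 • ((0 : ℝ), (1 : ℝ)) := by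
      ext <;> simp
    rw [hp, map_add, map_smul, map_smul]
    simp [ha, hb, mul_comm]
  have hpos : ∀ x ∈ S0, ∀ y ∈ S1, 0 < a * (y.1 - x.1) + b * (y.2 - x.2) := by
    intro x hx y hy
    have h1 : f x < u := hfu x (subset_convexHull ℝ S0 hx)
    have h2 : v < f y := hfv y (subset_convexHull ℝ S1 hy)
    have h3 : f x < f y := by linarith
    rw [hf, hf] at h3
    linarith
  obtain ⟨x0, hx0⟩ := h0ne
  obtain ⟨y0, hy0⟩ := h1ne
  have hab : 0 < a ^ 2 + b ^ 2 := by
    by_contra h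
    push_neg at h
    have ha0 : a = 0 := by nlinarith [sq_nonneg a, sq_nonneg b]
    have hb0 : b = 0 := by nlinarith [sq_nonneg a, sq_nonneg b]
    have := hpos x0 hx0 y0 hy0
    rw [ha0, hb0] at this
    simp at this
  -- finite max/min
  set G : (ℝ × ℝ) × (ℝ × ℝ) → ℝ := fun p =>
    (a * (p.2.2 - p.1.2) - b * (p.2.1 - p.1.1)) /
      (a * (p.2.1 - p.1.1) + b * (p.2.2 - p.1.2)) with hG
  have hFne : (h0fin.toFinset ×ˢ h1fin.toFinset).Nonempty :=
    ⟨(x0, y0), by simp [Finset.mem_product, hx0, hy0]⟩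
  obtain ⟨pM, hpM, hmaxM⟩ := Finset.exists_max_image _ G hFne
  obtain ⟨pm, hpm, hminm⟩ := Finset.exists_min_image _ G hFne
  rw [Finset.mem_product] at hpM hpm
  have hxM : pM.1 ∈ S0 := h0fin.mem_toFinset.mp hpM.1
  have hyM : pM.2 ∈ S1 := h1fin.mem_toFinset.mp hpM.2
  have hxm : pm.1 ∈ S0 := h0fin.mem_toFinset.mp hpm.1
  have hym : pm.2 ∈ S1 := h1fin.mem_toFinset.mp hpm.2
  have hMax := tangent_pair_max S0 S1 a b hab hpos pM.1 pM.2 hxM hyM (by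
    intro x' hx' y' hy'
    have := hmaxM (x', y') (by
      rw [Finset.mem_product]
      exact ⟨h0fin.mem_toFinset.mpr hx', h1fin.mem_toFinset.mpr hy'⟩)
    simpa [hG] using this)
  have hMin := tangent_pair_min S0 S1 a b hab hpos pm.1 pm.2 hxm hym (by
    intro x' hx' y' hy'
    have := hminm (x', y') (by
      rw [Finset.mem_product]
      exact ⟨h0fin.mem_toFinset.mpr hx', h1fin.mem_toFinset.mpr hy'⟩)
    simpa [hG] using this)
  refine ⟨pM.1, hxM, pM.2, hyM, pm.1, hxm, pm.2, hym, hMax.1, hMax.2, hMin.1, hMin.2, ?_⟩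
  -- distinctness
  intro heq
  have hx' : pm.1 = pM.1 := (congrArg Prod.fst heq).symm
  have hy' : pm.2 = pM.2 := (congrArg Prod.snd heq).symm
  have hzero : ∀ q ∈ S0 ∪ S1, detSide pM.1 pM.2 q = 0 := by
    intro q hq
    rcases hq with hq | hq
    · have h1 := hMax.1 q hq
      have h2 := hMin.1 q hq
      rw [hx', hy'] at h2
      linarith
    · have h1 := hMax.2 q hq
      have h2 := hMin.2 q hq
      rw [hx', hy'] at h2
      linarith
  -- get a third point
  have hxyne : pM.1 ≠ pM.2 := by
    intro h
    have : pM.1 ∈ S0 ∩ S1 := ⟨hxM, h ▸ hyM⟩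
    rw [hgen.1] at this
    exact this
  have hnsub : ¬(S0 ∪ S1 ⊆ {pM.1, pM.2}) := by
    intro hsub
    have : (S0 ∪ S1).ncard ≤ ({pM.1, pM.2} : Set (ℝ × ℝ)).ncard :=
      Set.ncard_le_ncard hsub ((Set.finite_singleton pM.2).insert pM.1)
    rw [Set.ncard_pair hxyne] at this
    omega
  obtain ⟨q, hq, hqne⟩ := Set.not_subset.mp hnsub
  simp only [Set.mem_insert_iff, Set.mem_singleton_iff, not_or] at hqne
  have hcol := collinear_of_detSide_zero pM.1 pM.2 q hxyne (hzero q hq)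
  exact hgen.2 pM.1 (Or.inl hxM) pM.2 (Or.inr hyM) q hq hxyne
    (Ne.symm hqne.1) (Ne.symm hqne.2) hcol
end

section
/- (Lemma 5.) Let a ≤ b be real numbers and let f be a function from ℝ to the nonempty compact subsets of ℝ². Assume: (1) the set of points t ∈ [a, b] at which f is not continuous within [a, b] is finite; (2) for every t ∈ (a, b] there exists a nonempty compact set L such that f(s) converges to L as s tends to t within [a, t), and f(t) ⊆ L; (3) for every t ∈ [a, b) there exists a nonempty compact set L such that f(s) converges to L as s tends to t within (t, b], and L ⊆ f(t); (4) for all c, d with a ≤ c ≤ d ≤ b, if f is continuous on [c, d] then f is monotonically decreasing on [c, d]. Then f is monotonically decreasing on all of [a, b]: for all s, t ∈ [a, b] with s ≤ t, one has f(t) ⊆ f(s). -/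
open TopologicalSpace Filter

/-- If `f r → L` in the Hausdorff metric along a nontrivial filter and eventually
`f r ⊆ C` for a closed set `C`, then `L ⊆ C`. -/
lemma limit_subset_of_eventually_subset {L : NonemptyCompacts (ℝ × ℝ)}
    {C : Set (ℝ × ℝ)} (hC : IsClosed C) {l : Filter ℝ} [l.NeBot]
    {f : ℝ → NonemptyCompacts (ℝ × ℝ)} (hf : Tendsto f l (nhds L))
    (h : ∀ᶠ r in l, (f r : Set (ℝ × ℝ)) ⊆ C) : (L : Set (ℝ × ℝ)) ⊆ C := by
  intro x hx
  rw [← hC.closure_eq]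
  rw [Metric.mem_closure_iff]
  intro ε hε
  have hd : ∀ᶠ r in l, dist (f r) L < ε := by
    have := (Metric.tendsto_nhds.mp hf) ε hε
    exact this
  obtain ⟨r, hr1, hr2⟩ := (hd.and h).exists
  have hfin : EMetric.hausdorffEdist (L : Set (ℝ × ℝ)) (f r : Set (ℝ × ℝ)) ≠ ⊤ := by
    apply Metric.hausdorffEdist_ne_top_of_nonempty_of_bounded
    · exact L.nonempty
    · exact (f r).nonempty
    · exact L.isCompact.isBounded
    · exact (f r).isCompact.isBounded
  have hdist : Metric.hausdorffDist (L : Set (ℝ × ℝ)) (f r : Set (ℝ × ℝ)) < ε := by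
    rw [Metric.hausdorffDist_comm]
    rw [← Metric.NonemptyCompacts.dist_eq]
    exact hr1
  obtain ⟨y, hy, hxy⟩ := Metric.exists_dist_lt_of_hausdorffDist_lt hx hdist hfin
  exact ⟨y, hr2 hy, hxy⟩

/-- If `f r → L` in the Hausdorff metric along a nontrivial filter and eventually
`C ⊆ f r`, then `C ⊆ L`. -/
lemma subset_limit_of_eventually_subset {L : NonemptyCompacts (ℝ × ℝ)}
    {C : Set (ℝ × ℝ)} {l : Filter ℝ} [l.NeBot]
    {f : ℝ → NonemptyCompacts (ℝ × ℝ)} (hf : Tendsto f l (nhds L))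
    (h : ∀ᶠ r in l, C ⊆ (f r : Set (ℝ × ℝ))) : C ⊆ (L : Set (ℝ × ℝ)) := by
  intro x hx
  rw [← L.isCompact.isClosed.closure_eq]
  rw [Metric.mem_closure_iff]
  intro ε hε
  have hd : ∀ᶠ r in l, dist (f r) L < ε := (Metric.tendsto_nhds.mp hf) ε hε
  obtain ⟨r, hr1, hr2⟩ := (hd.and h).exists
  have hfin : EMetric.hausdorffEdist ((f r : Set (ℝ × ℝ))) (L : Set (ℝ × ℝ)) ≠ ⊤ := by
    apply Metric.hausdorffEdist_ne_top_of_nonempty_of_bounded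
    · exact (f r).nonempty
    · exact L.nonempty
    · exact (f r).isCompact.isBounded
    · exact L.isCompact.isBounded
  have hdist : Metric.hausdorffDist ((f r : Set (ℝ × ℝ))) (L : Set (ℝ × ℝ)) < ε := by
    rw [← Metric.NonemptyCompacts.dist_eq]
    exact hr1
  obtain ⟨y, hy, hxy⟩ := Metric.exists_dist_lt_of_hausdorffDist_lt (hr2 hx) hdist hfin
  exact ⟨y, hy, hxy⟩

/-- **Lemma 5.** Let `f` be a map from `ℝ` to the space of nonempty compact
subsets of `ℝ²` (equipped with the Hausdorff metric) and let `a ≤ b`.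
Suppose that:
* `f` has only finitely many discontinuities within `[a, b]`;
* for every `t ∈ (a, b]`, `f` converges to some limit `L` from the left and
  `f t ⊆ L`;
* for every `t ∈ [a, b)`, `f` converges to some limit `L` from the right and
  `L ⊆ f t`;
* `f` is monotonically decreasing on every subinterval `[c, d] ⊆ [a, b]` on
  which it is continuous.
Then `f` is monotonically decreasing on all of `[a, b]`. -/
theorem monotone_decreasing_of_piecewise (a b : ℝ) (hab : a ≤ b)
    (f : ℝ → NonemptyCompacts (ℝ × ℝ))
    (hfin : {t ∈ Set.Icc a b | ¬ ContinuousWithinAt f (Set.Icc a b) t}.Finite)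
    (hleft : ∀ t ∈ Set.Ioc a b, ∃ L : NonemptyCompacts (ℝ × ℝ),
      Tendsto f (nhdsWithin t (Set.Ico a t)) (nhds L) ∧ (f t : Set (ℝ × ℝ)) ⊆ L)
    (hright : ∀ t ∈ Set.Ico a b, ∃ L : NonemptyCompacts (ℝ × ℝ),
      Tendsto f (nhdsWithin t (Set.Ioc t b)) (nhds L) ∧ (L : Set (ℝ × ℝ)) ⊆ f t)
    (hmono : ∀ c d, a ≤ c → c ≤ d → d ≤ b → ContinuousOn f (Set.Icc c d) →
      ∀ s ∈ Set.Icc c d, ∀ t ∈ Set.Icc c d, s ≤ t →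
        (f t : Set (ℝ × ℝ)) ⊆ (f s : Set (ℝ × ℝ))) :
    ∀ s ∈ Set.Icc a b, ∀ t ∈ Set.Icc a b, s ≤ t →
      (f t : Set (ℝ × ℝ)) ⊆ (f s : Set (ℝ × ℝ)) := by
  set D := {t ∈ Set.Icc a b | ¬ ContinuousWithinAt f (Set.Icc a b) t} with hD
  -- key induction on the number of discontinuities in `[s, t]`
  have key : ∀ n : ℕ, ∀ s ∈ Set.Icc a b, ∀ t ∈ Set.Icc a b, s ≤ t →
      (D ∩ Set.Icc s t).ncard ≤ n →
      (f t : Set (ℝ × ℝ)) ⊆ (f s : Set (ℝ × ℝ)) := by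
    intro n
    induction n with
    | zero =>
      intro s hs t ht hst hcard
      have hfin' : (D ∩ Set.Icc s t).Finite := hfin.subset Set.inter_subset_left
      have hempty : D ∩ Set.Icc s t = ∅ := by
        rw [← Set.ncard_eq_zero hfin']
        omega
      have hcont : ContinuousOn f (Set.Icc s t) := by
        intro x hx
        have hxab : x ∈ Set.Icc a b := ⟨hs.1.trans hx.1, hx.2.trans ht.2⟩
        have hxD : x ∉ D := by
          intro hxD
          have : x ∈ D ∩ Set.Icc s t := ⟨hxD, hx⟩
          rw [hempty] at this
          exact this
        have : ContinuousWithinAt f (Set.Icc a b) x := by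
          by_contra hc
          exact hxD ⟨hxab, hc⟩
        exact this.mono (Set.Icc_subset_Icc hs.1 ht.2)
      exact hmono s t hs.1 hst ht.2 hcont s ⟨le_refl s, hst⟩ t ⟨hst, le_refl t⟩ hst
    | succ n ih =>
      intro s hs t ht hst hcard
      have hfinst : (D ∩ Set.Icc s t).Finite := hfin.subset Set.inter_subset_left
      rcases Set.eq_empty_or_nonempty (D ∩ Set.Icc s t) with hempty | ⟨u, huD, hust⟩
      · -- no discontinuities: continuous case
        apply ih s hs t ht hst
        rw [hempty, Set.ncard_empty]
        exact Nat.zero_le _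
      · -- `u` is a discontinuity in `[s, t]`
        have huab : u ∈ Set.Icc a b := huD.1
        -- the diff has at most n elements
        have hdiff : ((D ∩ Set.Icc s t) \ {u}).ncard ≤ n := by
          have := Set.ncard_diff_singleton_lt_of_mem (Set.mem_inter huD hust) hfinst
          omega
        have hfindiff : ((D ∩ Set.Icc s t) \ {u}).Finite := hfinst.diff
        -- Step 1: f t ⊆ f u
        have step1 : (f t : Set (ℝ × ℝ)) ⊆ (f u : Set (ℝ × ℝ)) := by
          rcases eq_or_lt_of_le hust.2 with hut | hut
          · rw [hut]
          · -- u < t : use the right limit at u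
            have huIco : u ∈ Set.Ico a b := ⟨huab.1, lt_of_lt_of_le hut ht.2⟩
            obtain ⟨L, hL, hLsub⟩ := hright u huIco
            have hsub : Set.Ioo u t ⊆ Set.Ioc u b :=
              fun r hr => ⟨hr.1, hr.2.le.trans ht.2⟩
            have hL' : Tendsto f (nhdsWithin u (Set.Ioo u t)) (nhds L) :=
              hL.mono_left (nhdsWithin_mono u hsub)
            have hne : (nhdsWithin u (Set.Ioo u t)).NeBot := by
              apply mem_closure_iff_nhdsWithin_neBot.mp
              rw [closure_Ioo (ne_of_lt hut)]
              exact ⟨le_refl u, hut.le⟩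
            have hev : ∀ᶠ r in nhdsWithin u (Set.Ioo u t),
                (f t : Set (ℝ × ℝ)) ⊆ (f r : Set (ℝ × ℝ)) := by
              apply eventually_nhdsWithin_of_forall
              intro r hr
              apply ih r ⟨huab.1.trans hr.1.le, hr.2.le.trans ht.2⟩ t ht hr.2.le
              apply le_trans (Set.ncard_le_ncard _ hfindiff) hdiff
              intro v ⟨hvD, hv⟩
              exact ⟨⟨hvD, ⟨hust.1.trans (hr.1.le.trans hv.1), hv.2⟩⟩,
                fun hvu => by simp at hvu; exact absurd (hvu ▸ hv.1) (not_le.mpr hr.1)⟩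
            exact (subset_limit_of_eventually_subset hL' hev).trans hLsub
        -- Step 2: f u ⊆ f s
        have step2 : (f u : Set (ℝ × ℝ)) ⊆ (f s : Set (ℝ × ℝ)) := by
          rcases eq_or_lt_of_le hust.1 with hsu | hsu
          · rw [← hsu]
          · -- s < u : use the left limit at u
            have huIoc : u ∈ Set.Ioc a b := ⟨lt_of_le_of_lt hs.1 hsu, huab.2⟩
            obtain ⟨L, hL, hLsub⟩ := hleft u huIoc
            have hsub : Set.Ioo s u ⊆ Set.Ico a u :=
              fun r hr => ⟨hs.1.trans hr.1.le, hr.2⟩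
            have hL' : Tendsto f (nhdsWithin u (Set.Ioo s u)) (nhds L) :=
              hL.mono_left (nhdsWithin_mono u hsub)
            have hne : (nhdsWithin u (Set.Ioo s u)).NeBot := by
              apply mem_closure_iff_nhdsWithin_neBot.mp
              rw [closure_Ioo (ne_of_lt hsu)]
              exact ⟨hsu.le, le_refl u⟩
            have hev : ∀ᶠ r in nhdsWithin u (Set.Ioo s u),
                (f r : Set (ℝ × ℝ)) ⊆ (f s : Set (ℝ × ℝ)) := by
              apply eventually_nhdsWithin_of_forall
              intro r hr
              apply ih s hs r ⟨hs.1.trans hr.1.le, (hr.2.le.trans hust.2).trans ht.2⟩ hr.1.le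
              apply le_trans (Set.ncard_le_ncard _ hfindiff) hdiff
              intro v ⟨hvD, hv⟩
              exact ⟨⟨hvD, ⟨hv.1, hv.2.trans (hr.2.le.trans hust.2)⟩⟩,
                fun hvu => by simp at hvu; exact absurd (hvu ▸ hv.2) (not_le.mpr hr.2)⟩
            exact hLsub.trans
              (limit_subset_of_eventually_subset (f s).isCompact.isClosed hL' hev)
        exact step1.trans step2
  intro s hs t ht hst
  exact key D.ncard s hs t ht hst
    (Set.ncard_le_ncard Set.inter_subset_left hfin)
end
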